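/- Let a, b be norm-one quaternions. The identity T_{a,b}(T_{a,b}(y)·x̄ + y·x) = T_{a,b}(y)·x̄ + y·x holds for all quaternions x, y (where T_{a,b}(z) = azb) if and only if a = b = 1 or a = b = −1. -/

import Mathlib

open Quaternion

private lemma central_real (c : Quaternion ℝ) (h : ∀ y, c * y = y * c) :
    c = ((c.re : ℝ) : Quaternion ℝ) := by
  have h1 := congrArg (QuaternionAlgebra.imJ : Quaternion ℝ → ℝ) (h (@id (Quaternion ℝ) ⟨0,1,0,0⟩))
  have h2 := congrArg (QuaternionAlgebra.imK : Quaternion ℝ → ℝ) (h (@id (Quaternion ℝ) ⟨0,1,0,0⟩))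
  have h3 := congrArg (QuaternionAlgebra.imJ : Quaternion ℝ → ℝ) (h (@id (Quaternion ℝ) ⟨0,0,0,1⟩))
  simp only [Quaternion.imI_mul, Quaternion.imJ_mul, Quaternion.imK_mul] at h1 h2 h3
  dsimp only [id] at h1 h2 h3
  norm_num at h1 h2 h3
  ext
  · rfl
  · show c.imI = 0; linarith
  · show c.imJ = 0; linarith
  · show c.imK = 0; linarith

private lemma two_ne : (2 : Quaternion ℝ) ≠ 0 := by
  have h2 : ((2:ℝ) : Quaternion ℝ) ≠ 0 := by
    intro h
    have h3 := Quaternion.coe_injective (h.trans Quaternion.coe_zero.symm)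
    norm_num at h3
  exact_mod_cast h2

set_option maxHeartbeats 1600000 in
theorem stmt_6 (a b : Quaternion ℝ) (ha : ‖a‖ = 1) (hb : ‖b‖ = 1) :
    (∀ x y : Quaternion ℝ,
        a * ((a * y * b) * star x + y * x) * b = (a * y * b) * star x + y * x) ↔
      ((a = 1 ∧ b = 1) ∨ (a = -1 ∧ b = -1)) := by
  constructor
  · intro h
    have ha0 : a ≠ 0 := by intro h0; rw [h0, norm_zero] at ha; norm_num at ha
    have key : ∀ y : Quaternion ℝ, a * a * y * (b * b) = y := by
      intro y
      have h1 := h 1 y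
      simp only [star_one, mul_one] at h1
      have e1 : a * (a * y * b + y) * b = a * a * y * (b * b) + a * y * b := by noncomm_ring
      rw [e1, add_comm (a * y * b) y] at h1
      exact add_right_cancel h1
    have hab : a * a * (b * b) = 1 := by simpa using key 1
    have haa0 : a * a ≠ 0 := mul_ne_zero ha0 ha0
    have hba : (b * b) * (a * a) = 1 := by
      have hb2 : b * b = (a * a)⁻¹ := eq_inv_of_mul_eq_one_right hab
      rw [hb2, inv_mul_cancel₀ haa0]
    have hcomm : ∀ y, (a * a) * y = y * (a * a) := by
      intro y
      calc a * a * y = a * a * y * ((b * b) * (a * a)) := by rw [hba, mul_one]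
        _ = (a * a * y * (b * b)) * (a * a) := by noncomm_ring
        _ = y * (a * a) := by rw [key]
    have hreal : a * a = (((a * a).re : ℝ) : Quaternion ℝ) := central_real _ hcomm
    have hn : ‖a * a‖ = 1 := by rw [norm_mul, ha, mul_one]
    have habs : |(a * a).re| = 1 := by
      rw [hreal, Quaternion.norm_coe, Real.norm_eq_abs] at hn; exact hn
    rcases (abs_eq (by norm_num : (0:ℝ) ≤ 1)).mp habs with hr | hr
    · -- a * a = 1
      have haa : a * a = 1 := by rw [hreal, hr]; norm_num
      have hbb : b * b = 1 := by rw [haa, one_mul] at hab; exact hab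
      have hacase : a = 1 ∨ a = -1 := by
        have e : (a - 1) * (a + 1) = 0 := by
          have e2 : (a - 1) * (a + 1) = a * a - 1 := by noncomm_ring
          rw [e2, haa, sub_self]
        rcases mul_eq_zero.mp e with h' | h'
        · exact Or.inl (sub_eq_zero.mp h')
        · exact Or.inr (eq_neg_of_add_eq_zero_left h')
      have hbcase : b = 1 ∨ b = -1 := by
        have e : (b - 1) * (b + 1) = 0 := by
          have e2 : (b - 1) * (b + 1) = b * b - 1 := by noncomm_ring
          rw [e2, hbb, sub_self]
        rcases mul_eq_zero.mp e with h' | h'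
        · exact Or.inl (sub_eq_zero.mp h')
        · exact Or.inr (eq_neg_of_add_eq_zero_left h')
      rcases hacase with rfl | rfl <;> rcases hbcase with rfl | rfl
      · exact Or.inl ⟨rfl, rfl⟩
      · exfalso
        have h1 := congrArg (QuaternionAlgebra.imI : Quaternion ℝ → ℝ) (h (@id (Quaternion ℝ) ⟨0,1,0,0⟩) 1)
        simp only [Quaternion.imI_mul, Quaternion.re_mul, Quaternion.imJ_mul,
          Quaternion.imK_mul, Quaternion.imI_add, Quaternion.re_add, Quaternion.imJ_add,
          Quaternion.imK_add, Quaternion.re_star, Quaternion.imI_star, Quaternion.imJ_star,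
          Quaternion.imK_star, Quaternion.re_neg, Quaternion.imI_neg, Quaternion.imJ_neg,
          Quaternion.imK_neg, Quaternion.re_one, Quaternion.imI_one, Quaternion.imJ_one,
          Quaternion.imK_one] at h1
        dsimp only [id] at h1
        norm_num at h1
      · exfalso
        have h1 := congrArg (QuaternionAlgebra.imI : Quaternion ℝ → ℝ) (h (@id (Quaternion ℝ) ⟨0,1,0,0⟩) 1)
        simp only [Quaternion.imI_mul, Quaternion.re_mul, Quaternion.imJ_mul,
          Quaternion.imK_mul, Quaternion.imI_add, Quaternion.re_add, Quaternion.imJ_add,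
          Quaternion.imK_add, Quaternion.re_star, Quaternion.imI_star, Quaternion.imJ_star,
          Quaternion.imK_star, Quaternion.re_neg, Quaternion.imI_neg, Quaternion.imJ_neg,
          Quaternion.imK_neg, Quaternion.re_one, Quaternion.imI_one, Quaternion.imJ_one,
          Quaternion.imK_one] at h1
        dsimp only [id] at h1
        norm_num at h1
      · exact Or.inr ⟨rfl, rfl⟩
    · -- a * a = -1
      exfalso
      have haa : a * a = -1 := by rw [hreal, hr]; norm_num
      have hbb : b * b = -1 := by
        rw [haa, neg_one_mul] at hab
        exact neg_eq_iff_eq_neg.mp hab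
      have hbstar : b * star b = 1 := by
        rw [Quaternion.self_mul_star]
        have : normSq b = 1 := by rw [Quaternion.normSq_eq_norm_mul_self, hb]; norm_num
        rw [this]; norm_num
      have hanb : a = -b := by
        have h1 := h b 1
        simp only [mul_one, one_mul] at h1
        rw [mul_assoc a b (star b), hbstar, mul_one] at h1
        have e : a * (a + b) * b = (a * a) * b + a * (b * b) := by noncomm_ring
        rw [e, haa, hbb, neg_one_mul, mul_neg_one] at h1
        -- h1 : -b + -a = a + b
        have h3 : a + a = -b + -b := by
          calc a + a = (a + b) + (a - b) := by abel
            _ = (-b + -a) + (a - b) := by rw [← h1]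
            _ = -b + -b := by abel
        rw [← two_mul, ← two_mul] at h3
        exact mul_left_cancel₀ two_ne h3
      have hbc : ∀ y, b * y = y * b := by
        intro y
        have h1 := h b y
        rw [mul_assoc (a * y) b (star b), hbstar, mul_one] at h1
        have e : a * (a * y + y * b) * b = (a * a) * (y * b) + (a * y) * (b * b) := by
          noncomm_ring
        rw [e, haa, hbb, neg_one_mul, mul_neg_one] at h1
        rw [hanb] at h1
        simp only [neg_mul, neg_neg] at h1
        -- h1 : -(y*b) + b*y = -(b*y) + y*b
        have h3 : b * y + b * y = y * b + y * b := by
          calc b * y + b * y = (-(y*b) + b*y) + (b*y + y*b) := by abel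
            _ = (-(b*y) + y*b) + (b*y + y*b) := by rw [h1]
            _ = y * b + y * b := by abel
        rw [← two_mul, ← two_mul] at h3
        exact mul_left_cancel₀ two_ne h3
      have hbreal : b = ((b.re : ℝ) : Quaternion ℝ) := central_real _ hbc
      rw [hbreal] at hbb
      have hc := congrArg (QuaternionAlgebra.re : Quaternion ℝ → ℝ) hbb
      simp only [Quaternion.re_mul, Quaternion.re_coe, Quaternion.imI_coe, Quaternion.imJ_coe,
        Quaternion.imK_coe, Quaternion.re_neg, Quaternion.re_one] at hc
      nlinarith [hc]
  · rintro (⟨rfl, rfl⟩ | ⟨rfl, rfl⟩) <;> intro x y <;> noncomm_ring
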